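/- Let Ω be a nonempty finite set and f : Ω → ℝ a function with f(g) ≥ 0 for all g ∈ Ω. Let F = max_{g ∈ Ω} f(g) and let M = {g ∈ Ω : f(g) = F} be the set of maximizers. Then the Gibbs mass of the modes satisfies (Σ_{g ∈ M} e^{f(g)}) / (Σ_{g ∈ Ω} e^{f(g)}) ≤ |M|·e^{F} / (|M|·e^{F} + |Ω| − |M|). -/

import Mathlib

open scoped Classical

/-- Key inequality in the proof of Theorem 3 (stability implies non-degeneracy):
for a finite nonempty set `Ω` and a nonnegative energy `f`, with `F = max f` and
`M` the set of maximizers (modes), the Gibbs mass of the modes satisfies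
`(Σ_{g∈M} e^{f g}) / (Σ_{g∈Ω} e^{f g}) ≤ |M|·e^F / (|M|·e^F + |Ω| − |M|)`. -/
theorem gibbs_mass_of_modes_le {Ω : Type*} [Fintype Ω] [Nonempty Ω]
    (f : Ω → ℝ) (hf : ∀ g, 0 ≤ f g) :
    (∑ g ∈ Finset.univ.filter
          (fun g => f g = Finset.univ.sup' Finset.univ_nonempty f), Real.exp (f g)) /
        (∑ g : Ω, Real.exp (f g)) ≤
      ((Finset.univ.filter
            (fun g => f g = Finset.univ.sup' Finset.univ_nonempty f)).card *
          Real.exp (Finset.univ.sup' Finset.univ_nonempty f)) /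
        ((Finset.univ.filter
              (fun g => f g = Finset.univ.sup' Finset.univ_nonempty f)).card *
            Real.exp (Finset.univ.sup' Finset.univ_nonempty f) +
          (Fintype.card Ω : ℝ) -
          (Finset.univ.filter
              (fun g => f g = Finset.univ.sup' Finset.univ_nonempty f)).card) := by
  set F := Finset.univ.sup' Finset.univ_nonempty f with hF
  set M := Finset.univ.filter (fun g => f g = F) with hM
  -- numerator equals |M| * exp F
  have hnum : (∑ g ∈ M, Real.exp (f g)) = (M.card : ℝ) * Real.exp F := by
    have h1 : (∑ g ∈ M, Real.exp (f g)) = ∑ _g ∈ M, Real.exp F := by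
      refine Finset.sum_congr rfl fun g hg => ?_
      rw [hM, Finset.mem_filter] at hg
      rw [hg.2]
    rw [h1, Finset.sum_const, nsmul_eq_mul]
  -- M is nonempty
  have hMne : M.Nonempty := by
    obtain ⟨g, hg, hgF⟩ := Finset.exists_mem_eq_sup' (Finset.univ_nonempty (α := Ω)) f
    exact ⟨g, by rw [hM, Finset.mem_filter]; exact ⟨Finset.mem_univ _, hgF.symm⟩⟩
  have hMcard : (1 : ℝ) ≤ M.card := by exact_mod_cast Finset.card_pos.mpr hMne
  have hexpF : (0:ℝ) < Real.exp F := Real.exp_pos F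
  have hy : (0:ℝ) < (M.card : ℝ) * Real.exp F + (Fintype.card Ω : ℝ) - M.card := by
    have h1 : (M.card : ℝ) ≤ (Fintype.card Ω : ℝ) := by
      rw [← Finset.card_univ]
      exact_mod_cast Finset.card_le_card (Finset.filter_subset _ _)
    nlinarith [hMcard, hexpF]
  -- denominator bound
  have hden : (M.card : ℝ) * Real.exp F + (Fintype.card Ω : ℝ) - M.card ≤ ∑ g : Ω, Real.exp (f g) := by
    have hsplit : (∑ g : Ω, Real.exp (f g)) =
        (∑ g ∈ M, Real.exp (f g)) + ∑ g ∈ Finset.univ.filter (fun g => ¬ f g = F), Real.exp (f g) := by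
      rw [hM]
      exact (Finset.sum_filter_add_sum_filter_not _ _ _).symm
    have hcompl : ((Finset.univ.filter (fun g => ¬ f g = F)).card : ℝ)
        ≤ ∑ g ∈ Finset.univ.filter (fun g => ¬ f g = F), Real.exp (f g) := by
      calc ((Finset.univ.filter (fun g => ¬ f g = F)).card : ℝ)
          = ∑ _g ∈ Finset.univ.filter (fun g => ¬ f g = F), (1:ℝ) := by
            simp
        _ ≤ _ := Finset.sum_le_sum fun g _ => Real.one_le_exp (hf g)
    have hcard : ((Finset.univ.filter (fun g => ¬ f g = F)).card : ℝ)
        = (Fintype.card Ω : ℝ) - M.card := by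
      have := Finset.card_filter_add_card_filter_not
        (s := (Finset.univ : Finset Ω)) (p := fun g => f g = F)
      rw [hM, ← Finset.card_univ (α := Ω)]
      push_cast [← this]
      ring
    rw [hsplit, hnum]
    linarith [hcard ▸ hcompl]
  rw [hnum]
  exact div_le_div_of_nonneg_left (by positivity) hy hden
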